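/- Let α > 0 and let f : Ḡ×I'×I → ℝ be continuous, continuously differentiable in its second (primed) variable E', with ∂f/∂E' α-Hölder in E' uniformly on Ḡ×I'×I (f ∈ C(Ḡ×I, C^{1+α}(I'))). Then for every x ∈ Ḡ and E ∈ [E₀,E_m) both Hadamard finite part integrals below exist and p.f.∫_E^{E_m} f(x,E',E)/(E'−E)² dE' = p.f.∫_E^{E_m} (∂f/∂E')(x,E',E)/(E'−E) dE' + (∂f/∂E')(x,E,E) − f(x,E_m,E)/(E_m−E). -/

import Mathlib

open MeasureTheory Filter Set
open scoped Topology

noncomputable section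

abbrev E3 : Type := EuclideanSpace ℝ (Fin 3)

/-- Hadamard finite part of order 1 with upper limit `b`. -/
def HasPF1Upper (g : ℝ → ℝ) (x b L : ℝ) : Prop :=
  Tendsto (fun ε : ℝ => (∫ t in (x + ε)..b, g t / (t - x)) + g x * Real.log ε)
    (𝓝[>] (0 : ℝ)) (𝓝 L)

/-- Hadamard finite part of order 2 with upper limit `b`, `d` being the right derivative
`g'(x⁺)`. -/
def HasPF2Upper (g : ℝ → ℝ) (d x b L : ℝ) : Prop :=
  Tendsto (fun ε : ℝ => (∫ t in (x + ε)..b, g t / (t - x) ^ 2) + d * Real.log ε - g x / ε)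
    (𝓝[>] (0 : ℝ)) (𝓝 L)

/-- for `f ∈ C(Ḡ×I, C^{1+α}(I'))` (with `f' = ∂f/∂E'` continuous and
`α`-Hölder in `E'` uniformly), for `x ∈ Ḡ`, `E ∈ [E₀,E_m)` both finite parts exist and
`p.f.∫_E^{E_m} f(x,E',E)/(E'−E)² dE'
 = p.f.∫_E^{E_m} (∂f/∂E')(x,E',E)/(E'−E) dE' + (∂f/∂E')(x,E,E) − f(x,E_m,E)/(E_m−E)`. -/
theorem stmt4 (G : Set E3) (hGopen : IsOpen G) (hGbdd : Bornology.IsBounded G)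
    (E₀ Em α : ℝ) (hE₀ : 0 ≤ E₀) (hI : E₀ < Em) (hα : 0 < α)
    (f f' : E3 → ℝ → ℝ → ℝ) (C : ℝ)
    (hf : ContinuousOn (fun p : E3 × ℝ × ℝ => f p.1 p.2.1 p.2.2)
      (closure G ×ˢ Set.Icc E₀ Em ×ˢ Set.Icc E₀ Em))
    (hf' : ContinuousOn (fun p : E3 × ℝ × ℝ => f' p.1 p.2.1 p.2.2)
      (closure G ×ˢ Set.Icc E₀ Em ×ˢ Set.Icc E₀ Em))
    (hderiv : ∀ x ∈ closure G, ∀ E ∈ Set.Icc E₀ Em, ∀ E' ∈ Set.Icc E₀ Em,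
      HasDerivWithinAt (fun s => f x s E) (f' x E' E) (Set.Icc E₀ Em) E')
    (hHolder : ∀ x ∈ closure G, ∀ E ∈ Set.Icc E₀ Em, ∀ E₁' ∈ Set.Icc E₀ Em,
      ∀ E₂' ∈ Set.Icc E₀ Em, |f' x E₁' E - f' x E₂' E| ≤ C * |E₁' - E₂'| ^ α) :
    ∀ x ∈ closure G, ∀ E ∈ Set.Ico E₀ Em, ∃ L₁ : ℝ,
      HasPF1Upper (fun E' => f' x E' E) E Em L₁ ∧
      HasPF2Upper (fun E' => f x E' E) (f' x E E) E Em
        (L₁ + f' x E E - f x Em E / (Em - E)) := by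
  intro x hx E hE
  obtain ⟨hE0, hEm⟩ := hE
  have hEIcc : E ∈ Set.Icc E₀ Em := ⟨hE0, hEm.le⟩
  set g : ℝ → ℝ := fun t => f x t E with hgdef
  set g' : ℝ → ℝ := fun t => f' x t E with hg'def
  have hmaps : Set.MapsTo (fun t : ℝ => (x, t, E)) (Set.Icc E₀ Em)
      (closure G ×ˢ Set.Icc E₀ Em ×ˢ Set.Icc E₀ Em) := fun t ht => ⟨hx, ht, hEIcc⟩
  have hcont_aux : Continuous (fun t : ℝ => ((x, t, E) : E3 × ℝ × ℝ)) :=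
    continuous_const.prodMk (continuous_id.prodMk continuous_const)
  have hgc : ContinuousOn g (Set.Icc E₀ Em) := hf.comp hcont_aux.continuousOn hmaps
  have hg'c : ContinuousOn g' (Set.Icc E₀ Em) := hf'.comp hcont_aux.continuousOn hmaps
  set h : ℝ → ℝ := fun t => (g' t - g' E) / (t - E) with hhdef
  -- C is nonneg
  have hC : 0 ≤ C := by
    have h1 := (abs_nonneg (f' x Em E - f' x E E)).trans
      (hHolder x hx E hEIcc Em ⟨hI.le, le_rfl⟩ E hEIcc)
    have h2 : (0:ℝ) < |Em - E| ^ α :=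
      Real.rpow_pos_of_pos (by rw [abs_pos, sub_ne_zero]; exact (ne_of_gt hEm)) α
    nlinarith
  -- pointwise bound for h
  have hh_bound : ∀ t ∈ Set.Ioc E Em, |h t| ≤ C * (t - E) ^ (α - 1) := by
    intro t ht
    have htE : 0 < t - E := sub_pos.mpr ht.1
    have htIcc : t ∈ Set.Icc E₀ Em := ⟨hE0.trans ht.1.le, ht.2⟩
    have hH := hHolder x hx E hEIcc t htIcc E hEIcc
    have : |h t| = |g' t - g' E| / (t - E) := by
      rw [hhdef]; rw [abs_div, abs_of_pos htE]
    rw [this]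
    rw [div_le_iff₀ htE]
    calc |g' t - g' E| ≤ C * |t - E| ^ α := hH
      _ = C * (t - E) ^ (α - 1) * (t - E) := by
          rw [abs_of_pos htE, mul_assoc, ← Real.rpow_add_one (ne_of_gt htE) (α - 1),
            sub_add_cancel]
  -- integrability of h on [E, Em]
  have hdom : IntervalIntegrable (fun t => C * (t - E) ^ (α - 1)) volume E Em := by
    have h1 : IntervalIntegrable (fun u : ℝ => u ^ (α - 1)) volume 0 (Em - E) :=
      intervalIntegral.intervalIntegrable_rpow' (by linarith)
    have h2 := (h1.comp_sub_right E)
    simpa using h2.const_mul C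
  have hh_meas : AEStronglyMeasurable h (volume.restrict (Set.Ioc E Em)) := by
    have : ContinuousOn h (Set.Ioc E Em) := by
      apply ContinuousOn.div
      · exact (hg'c.mono (Set.Ioc_subset_Icc_self.trans
          (Set.Icc_subset_Icc hE0 le_rfl))).sub continuousOn_const
      · exact (continuous_sub_right E).continuousOn
      · intro t ht; exact ne_of_gt (sub_pos.mpr ht.1)
    exact this.aestronglyMeasurable measurableSet_Ioc
  have hh_int : IntervalIntegrable h volume E Em := by
    rw [intervalIntegrable_iff_integrableOn_Ioc_of_le hEm.le]
    have hdom' : IntegrableOn (fun t => C * (t - E) ^ (α - 1)) (Set.Ioc E Em) volume := by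
      rw [← intervalIntegrable_iff_integrableOn_Ioc_of_le hEm.le]; exact hdom
    refine hdom'.integrable.mono hh_meas ?_
    refine (ae_restrict_iff' measurableSet_Ioc).2 (ae_of_all _ fun t ht => ?_)
    have := hh_bound t ht
    rw [Real.norm_eq_abs, Real.norm_eq_abs]
    exact this.trans (le_abs_self _)
  set L₁ : ℝ := (∫ t in E..Em, h t) + g' E * Real.log (Em - E) with hL₁def
  -- key identity A
  have keyA : ∀ ε ∈ Set.Ioo (0:ℝ) (Em - E),
      (∫ t in (E + ε)..Em, g' t / (t - E)) =
        (∫ t in (E + ε)..Em, h t) + g' E * (Real.log (Em - E) - Real.log ε) := by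
    intro ε hε
    have hεE : E < E + ε := by linarith [hε.1]
    have hle : E + ε ≤ Em := by linarith [hε.2]
    have huIcc : Set.uIcc (E + ε) Em = Set.Icc (E + ε) Em := Set.uIcc_of_le hle
    have hcongr : ∀ t ∈ Set.uIcc (E + ε) Em,
        g' t / (t - E) = h t + g' E * (t - E)⁻¹ := by
      intro t ht
      rw [huIcc] at ht
      have : t - E ≠ 0 := ne_of_gt (by linarith [ht.1])
      rw [hhdef]; field_simp; ring
    rw [intervalIntegral.integral_congr hcongr]
    have hsub : Set.Icc (E + ε) Em ⊆ Set.Icc E₀ Em :=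
      Set.Icc_subset_Icc (by linarith) le_rfl
    have hhc : ContinuousOn h (Set.Icc (E + ε) Em) := by
      apply ContinuousOn.div
      · exact (hg'c.mono hsub).sub continuousOn_const
      · exact (continuous_sub_right E).continuousOn
      · intro t ht; exact ne_of_gt (sub_pos.mpr (by linarith [ht.1]))
    have hinvc : ContinuousOn (fun t : ℝ => (t - E)⁻¹) (Set.Icc (E + ε) Em) := by
      apply ContinuousOn.inv₀ ((continuous_sub_right E).continuousOn)
      intro t ht
      exact ne_of_gt (sub_pos.mpr (by linarith [ht.1]))
    have hh_int' : IntervalIntegrable h volume (E + ε) Em := by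
      rw [intervalIntegrable_iff_integrableOn_Icc_of_le hle]
      exact hhc.integrableOn_compact isCompact_Icc
    have hinv_int : IntervalIntegrable (fun t : ℝ => (t - E)⁻¹) volume (E + ε) Em := by
      rw [intervalIntegrable_iff_integrableOn_Icc_of_le hle]
      exact hinvc.integrableOn_compact isCompact_Icc
    rw [intervalIntegral.integral_add hh_int' (hinv_int.const_mul (g' E))]
    congr 1
    rw [intervalIntegral.integral_const_mul]
    congr 1
    have : (∫ t in (E + ε)..Em, (t - E)⁻¹) = ∫ u in ε..(Em - E), u⁻¹ := by
      have := intervalIntegral.integral_comp_sub_right (a := E + ε) (b := Em)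
        (fun u : ℝ => u⁻¹) E
      simpa using this
    rw [this]
    rw [integral_inv_of_pos hε.1 (by linarith [hε.2] : (0:ℝ) < Em - E)]
    rw [Real.log_div (ne_of_gt (by linarith [hε.2])) (ne_of_gt hε.1)]
  -- key identity B (integration by parts)
  have keyB : ∀ ε ∈ Set.Ioo (0:ℝ) (Em - E),
      (∫ t in (E + ε)..Em, g t / (t - E) ^ 2) =
        (∫ t in (E + ε)..Em, g' t / (t - E)) + g (E + ε) / ε - g Em / (Em - E) := by
    intro ε hε
    have hεpos := hε.1
    have hle : E + ε ≤ Em := by linarith [hε.2]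
    have hsub : Set.Icc (E + ε) Em ⊆ Set.Icc E₀ Em :=
      Set.Icc_subset_Icc (by linarith) le_rfl
    have hne : ∀ t ∈ Set.Icc (E + ε) Em, t - E ≠ 0 :=
      fun t ht => ne_of_gt (sub_pos.mpr (by linarith [ht.1]))
    set φ : ℝ → ℝ := fun t => g t / (t - E) with hφdef
    have hφc : ContinuousOn φ (Set.Icc (E + ε) Em) :=
      ((hgc.mono hsub).div ((continuous_sub_right E).continuousOn) hne)
    have hderφ : ∀ t ∈ Set.Ioo (E + ε) Em,
        HasDerivWithinAt φ (g' t / (t - E) - g t / (t - E) ^ 2) (Set.Ioi t) t := by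
      intro t ht
      have htIoo : t ∈ Set.Ioo E₀ Em := ⟨by linarith [ht.1], ht.2⟩
      have hgd : HasDerivAt g (g' t) t := by
        have := hderiv x hx E hEIcc t ⟨htIoo.1.le, htIoo.2.le⟩
        exact this.hasDerivAt (Icc_mem_nhds htIoo.1 htIoo.2)
      have htE : t - E ≠ 0 := ne_of_gt (sub_pos.mpr (by linarith [ht.1]))
      have hd : HasDerivAt φ ((g' t * (t - E) - g t * 1) / (t - E) ^ 2) t :=
        hgd.div ((hasDerivAt_id t).sub_const E) htE
      have : (g' t * (t - E) - g t * 1) / (t - E) ^ 2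
          = g' t / (t - E) - g t / (t - E) ^ 2 := by
        field_simp
      rw [this] at hd
      exact hd.hasDerivWithinAt
    have hintc : ContinuousOn (fun t => g' t / (t - E) - g t / (t - E) ^ 2)
        (Set.Icc (E + ε) Em) := by
      apply ContinuousOn.sub
      · exact (hg'c.mono hsub).div ((continuous_sub_right E).continuousOn) hne
      · exact (hgc.mono hsub).div (((continuous_sub_right E).continuousOn).pow 2)
          (fun t ht => pow_ne_zero 2 (hne t ht))
    have hint_int : IntervalIntegrable (fun t => g' t / (t - E) - g t / (t - E) ^ 2)
        volume (E + ε) Em := by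
      rw [intervalIntegrable_iff_integrableOn_Icc_of_le hle]
      exact hintc.integrableOn_compact isCompact_Icc
    have hftc := intervalIntegral.integral_eq_sub_of_hasDeriv_right_of_le hle hφc hderφ hint_int
    have hint1 : IntervalIntegrable (fun t => g' t / (t - E)) volume (E + ε) Em := by
      rw [intervalIntegrable_iff_integrableOn_Icc_of_le hle]
      exact ((hg'c.mono hsub).div ((continuous_sub_right E).continuousOn)
        hne).integrableOn_compact isCompact_Icc
    have hint2 : IntervalIntegrable (fun t => g t / (t - E) ^ 2) volume (E + ε) Em := by
      rw [intervalIntegrable_iff_integrableOn_Icc_of_le hle]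
      exact ((hgc.mono hsub).div (((continuous_sub_right E).continuousOn).pow 2)
        (fun t ht => pow_ne_zero 2 (hne t ht))).integrableOn_compact isCompact_Icc
    rw [intervalIntegral.integral_sub hint1 hint2] at hftc
    have hφEm : φ Em = g Em / (Em - E) := rfl
    have hφε : φ (E + ε) = g (E + ε) / ε := by
      rw [hφdef]; simp [add_sub_cancel_left]
    rw [hφEm, hφε] at hftc
    linarith [hftc]
  -- tendsto of primitive
  have hev : ∀ᶠ ε in 𝓝[>] (0:ℝ), ε ∈ Set.Ioo (0:ℝ) (Em - E) := by
    filter_upwards [Ioo_mem_nhdsGT (show (0:ℝ) < Em - E by linarith)] with ε hε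
    exact hε
  have hmap : Tendsto (fun ε : ℝ => E + ε) (𝓝[>] (0:ℝ)) (𝓝[Set.uIcc E Em] E) := by
    rw [tendsto_nhdsWithin_iff]
    constructor
    · have : Tendsto (fun ε : ℝ => E + ε) (𝓝 (0:ℝ)) (𝓝 (E + 0)) :=
        (continuous_const.add continuous_id).tendsto 0
      simpa using this.mono_left nhdsWithin_le_nhds
    · filter_upwards [hev] with ε hε
      rw [Set.uIcc_of_le hEm.le]
      exact ⟨by linarith [hε.1], by linarith [hε.2]⟩
  have hh_intIcc : IntegrableOn h (Set.uIcc E Em) volume := by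
    rw [Set.uIcc_of_le hEm.le, integrableOn_Icc_iff_integrableOn_Ioc]
    rw [intervalIntegrable_iff_integrableOn_Ioc_of_le hEm.le] at hh_int
    exact hh_int
  have hprim : Tendsto (fun ε : ℝ => ∫ t in (E + ε)..Em, h t) (𝓝[>] (0:ℝ))
      (𝓝 (∫ t in E..Em, h t)) := by
    have hc := intervalIntegral.continuousOn_primitive_interval_left hh_intIcc
    have := (hc E (Set.left_mem_uIcc)).tendsto
    exact this.comp hmap
  -- PF1
  have hPF1 : HasPF1Upper g' E Em L₁ := by
    rw [HasPF1Upper]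
    have heq : ∀ᶠ ε in 𝓝[>] (0:ℝ),
        (∫ t in (E + ε)..Em, h t) + g' E * Real.log (Em - E)
          = (∫ t in (E + ε)..Em, g' t / (t - E)) + g' E * Real.log ε := by
      filter_upwards [hev] with ε hε
      rw [keyA ε hε]; ring
    refine Tendsto.congr' heq ?_
    exact hprim.add tendsto_const_nhds
  -- slope limit
  have hslope : Tendsto (fun ε : ℝ => (g (E + ε) - g E) / ε) (𝓝[>] (0:ℝ))
      (𝓝 (f' x E E)) := by
    have hd := hderiv x hx E hEIcc E hEIcc
    rw [hasDerivWithinAt_iff_tendsto_slope] at hd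
    have hmap' : Tendsto (fun ε : ℝ => E + ε) (𝓝[>] (0:ℝ))
        (𝓝[Set.Icc E₀ Em \ {E}] E) := by
      rw [tendsto_nhdsWithin_iff]
      constructor
      · have : Tendsto (fun ε : ℝ => E + ε) (𝓝 (0:ℝ)) (𝓝 (E + 0)) :=
          (continuous_const.add continuous_id).tendsto 0
        simpa using this.mono_left nhdsWithin_le_nhds
      · filter_upwards [hev] with ε hε
        refine ⟨⟨by linarith [hε.1], by linarith [hε.2]⟩, ?_⟩
        simp only [Set.mem_singleton_iff]
        intro hcon; linarith [hε.1, congrArg (· - E) hcon]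
    have := hd.comp hmap'
    refine this.congr fun ε => ?_
    simp only [Function.comp_apply, slope_def_field, add_sub_cancel_left]; rfl
  -- PF2
  refine ⟨L₁, hPF1, ?_⟩
  rw [HasPF2Upper]
  have heq2 : ∀ᶠ ε in 𝓝[>] (0:ℝ),
      ((∫ t in (E + ε)..Em, g' t / (t - E)) + g' E * Real.log ε)
        + (g (E + ε) - g E) / ε - g Em / (Em - E)
      = (∫ t in (E + ε)..Em, g t / (t - E) ^ 2) + f' x E E * Real.log ε - g E / ε := by
    filter_upwards [hev] with ε hε
    rw [keyB ε hε]
    have : g' E = f' x E E := rfl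
    rw [this]
    have hεne : ε ≠ 0 := ne_of_gt hε.1
    field_simp
    ring
  refine Tendsto.congr' heq2 ?_
  exact (hPF1.add hslope).sub tendsto_const_nhds
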